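/- Let f(r) = r(1+r^2)^{-1/4} and h(r) = (1+r^2)^{-α} with α > 0, and let p ≥ 2 be an integer. For all r > 0, the quantity -h''(r)/h(r) - (p-1) f'(r)h'(r)/(f(r)h(r)) is strictly greater than (α r^2/(1+r^2)^2) * [p - (3 + 4α)]. -/

import Mathlib

noncomputable def f (r : ℝ) : ℝ := r * (1 + r ^ 2) ^ (-(1 / 4 : ℝ))

noncomputable def h (α : ℝ) (r : ℝ) : ℝ := (1 + r ^ 2) ^ (-α)

lemma u_pos (r : ℝ) : (0:ℝ) < 1 + r ^ 2 := by positivity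

lemma hasDerivAt_base (r : ℝ) : HasDerivAt (fun r : ℝ => 1 + r ^ 2) (2 * r) r := by
  simpa using ((hasDerivAt_pow 2 r).const_add 1)

lemma hasDerivAt_h (α r : ℝ) :
    HasDerivAt (h α) (2 * r * (-α * (1 + r ^ 2) ^ (-α - 1))) r := by
  unfold h
  have := (hasDerivAt_base r).rpow_const (p := -α) (Or.inl (ne_of_gt (u_pos r)))
  convert this using 1
  ring

lemma deriv_h (α : ℝ) :
    deriv (h α) = fun r => 2 * r * (-α * (1 + r ^ 2) ^ (-α - 1)) := by
  funext r; exact (hasDerivAt_h α r).deriv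

lemma hasDerivAt_h' (α r : ℝ) :
    HasDerivAt (deriv (h α))
      (2 * (-α * (1 + r ^ 2) ^ (-α - 1)) +
        2 * r * (-α * (2 * r * ((-α - 1) * (1 + r ^ 2) ^ (-α - 1 - 1))))) r := by
  rw [deriv_h]
  have h1 : HasDerivAt (fun r : ℝ => (1 + r ^ 2) ^ (-α - 1))
      (2 * r * ((-α - 1) * (1 + r ^ 2) ^ (-α - 1 - 1))) r := by
    have := (hasDerivAt_base r).rpow_const (p := -α - 1) (Or.inl (ne_of_gt (u_pos r)))
    convert this using 1
    ring
  have h2 : HasDerivAt (fun r : ℝ => 2 * r) 2 r := by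
    simpa using (hasDerivAt_id r).const_mul 2
  have key := h2.mul (h1.const_mul (-α))
  exact key

lemma hasDerivAt_f (r : ℝ) :
    HasDerivAt f
      ((1 + r ^ 2) ^ (-(1 / 4 : ℝ)) +
        r * (2 * r * (-(1 / 4 : ℝ) * (1 + r ^ 2) ^ (-(1 / 4 : ℝ) - 1)))) r := by
  unfold f
  have h1 : HasDerivAt (fun r : ℝ => (1 + r ^ 2) ^ (-(1 / 4 : ℝ)))
      (2 * r * (-(1 / 4 : ℝ) * (1 + r ^ 2) ^ (-(1 / 4 : ℝ) - 1))) r := by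
    have := (hasDerivAt_base r).rpow_const (p := -(1 / 4 : ℝ)) (Or.inl (ne_of_gt (u_pos r)))
    convert this using 1
    ring
  have key := (hasDerivAt_id r).mul h1
  refine key.congr_deriv ?_
  simp only [id_eq]
  ring

theorem stmt_4 (α : ℝ) (hα : 0 < α) (p : ℕ) (hp : 2 ≤ p) :
    ∀ r : ℝ, 0 < r →
      (α * r ^ 2 / (1 + r ^ 2) ^ 2) * ((p : ℝ) - (3 + 4 * α)) <
        -(deriv (deriv (h α)) r) / h α r
          - ((p : ℝ) - 1) * (deriv f r * deriv (h α) r) / (f r * h α r) := by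
  intro r hr
  have hu : (0:ℝ) < 1 + r ^ 2 := u_pos r
  rw [(hasDerivAt_h' α r).deriv, (hasDerivAt_h α r).deriv, (hasDerivAt_f r).deriv,
    show h α r = (1 + r ^ 2) ^ (-α) from rfl,
    show f r = r * (1 + r ^ 2) ^ (-(1/4:ℝ)) from rfl]
  set u : ℝ := 1 + r ^ 2 with hu_def
  set A : ℝ := u ^ (-α) with hA_def
  set B : ℝ := u ^ (-(1/4:ℝ)) with hB_def
  have hA : (0:ℝ) < A := Real.rpow_pos_of_pos hu _
  have hB : (0:ℝ) < B := Real.rpow_pos_of_pos hu _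
  have hu2 : (0:ℝ) < u ^ 2 := by positivity
  have eA2 : u ^ (-α - 1 - 1) = A * u⁻¹ * u⁻¹ := by
    rw [hA_def, show -α - 1 - 1 = -α + (-1) + (-1) by ring, Real.rpow_add hu,
      Real.rpow_add hu, Real.rpow_neg_one]
  have eA1 : u ^ (-α - 1) = A * u⁻¹ := by
    rw [hA_def, show -α - 1 = -α + (-1) by ring, Real.rpow_add hu, Real.rpow_neg_one]
  have eB1 : u ^ (-(1/4:ℝ) - 1) = B * u⁻¹ := by
    rw [hB_def, show -(1/4:ℝ) - 1 = -(1/4:ℝ) + (-1) by ring, Real.rpow_add hu,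
      Real.rpow_neg_one]
  rw [eA2, eA1, eB1]
  have hune : u ≠ 0 := ne_of_gt hu
  have hAne : A ≠ 0 := ne_of_gt hA
  have hBne : B ≠ 0 := ne_of_gt hB
  have hrne : r ≠ 0 := ne_of_gt hr
  have e1 : -(2 * (-α * (A * u⁻¹)) + 2 * r * (-α * (2 * r * ((-α - 1) * (A * u⁻¹ * u⁻¹))))) / A
      = (2 * α * u - 4 * α * (α + 1) * r ^ 2) / u ^ 2 := by
    field_simp
    ring
  have e2 : ((p : ℝ) - 1) * ((B + r * (2 * r * (-(1 / 4 : ℝ) * (B * u⁻¹)))) *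
        (2 * r * (-α * (A * u⁻¹)))) / (r * B * A)
      = (((p : ℝ) - 1) * (-(2 * α) * (u - r ^ 2 / 2))) / u ^ 2 := by
    field_simp
    ring
  rw [e1, e2]
  have hp' : (2:ℝ) ≤ (p:ℝ) := by exact_mod_cast hp
  have hpp : (0:ℝ) < (p:ℝ) := by linarith
  have key : α * r ^ 2 * ((p : ℝ) - (3 + 4 * α)) <
      (2 * α * u - 4 * α * (α + 1) * r ^ 2) - ((p : ℝ) - 1) * (-(2 * α) * (u - r ^ 2 / 2)) := by
    rw [hu_def]
    nlinarith [mul_pos hα hpp]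
  calc α * r ^ 2 / u ^ 2 * ((p : ℝ) - (3 + 4 * α))
      = (α * r ^ 2 * ((p : ℝ) - (3 + 4 * α))) / u ^ 2 := by ring
    _ < ((2 * α * u - 4 * α * (α + 1) * r ^ 2) - ((p : ℝ) - 1) * (-(2 * α) * (u - r ^ 2 / 2))) / u ^ 2 := by
        gcongr
    _ = (2 * α * u - 4 * α * (α + 1) * r ^ 2) / u ^ 2 -
        (((p : ℝ) - 1) * (-(2 * α) * (u - r ^ 2 / 2))) / u ^ 2 := by ring
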